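/- Assume the beacons do not all lie on a common line and let p^* be a Fermat–Weber point. Fix a ∈ (0,1), and for v ∈ E define sig^a(v) componentwise in the standard basis by (sig^a(v))_k = sign(v_k)·|v_k|^a. Let p : [0,∞) → E be differentiable with p(t) ≠ p_i for all t ≥ 0 and all i, satisfying p′(t) = sig^a(Σ_{i=1}^n ω_i g_i(p(t))) for all t ≥ 0. Then p(t) → p^* as t → ∞. -/

import Mathlib

open scoped RealInnerProductSpace BigOperators

/-- The bearing vector from point `q` towards beacon `P i`. -/
noncomputable def bearing {d n : ℕ} (P : Fin n → EuclideanSpace ℝ (Fin d))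
    (q : EuclideanSpace ℝ (Fin d)) (i : Fin n) : EuclideanSpace ℝ (Fin d) :=
  ‖P i - q‖⁻¹ • (P i - q)

/-- Componentwise signed power `sig^a` in the standard basis. -/
noncomputable def siga {d : ℕ} (a : ℝ) (v : EuclideanSpace ℝ (Fin d)) :
    EuclideanSpace ℝ (Fin d) :=
  WithLp.toLp 2 (fun k => Real.sign (v k) * |v k| ^ a)

section Helpers

variable {E : Type*} [NormedAddCommGroup E] [InnerProductSpace ℝ E]

lemma fw_hasFDerivAt_norm' {x : E} (hx : x ≠ 0) :
    HasFDerivAt (fun y : E => ‖y‖) (‖x‖⁻¹ • (innerSL ℝ x)) x := by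
  have h1 : HasFDerivAt (fun y : E => ‖y‖ ^ 2) (2 • (innerSL ℝ) x) x :=
    (hasStrictFDerivAt_norm_sq x).hasFDerivAt
  have hne : ‖x‖ ≠ 0 := norm_ne_zero_iff.2 hx
  have h2 : HasDerivAt Real.sqrt (1 / (2 * Real.sqrt (‖x‖ ^ 2))) (‖x‖ ^ 2) :=
    Real.hasDerivAt_sqrt (by positivity)
  have h3 := h2.comp_hasFDerivAt x h1
  have hfun : (Real.sqrt ∘ fun y : E => ‖y‖ ^ 2) = fun y : E => ‖y‖ := by
    funext y; exact Real.sqrt_sq (norm_nonneg y)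
  rw [hfun] at h3
  have hsq : Real.sqrt (‖x‖ ^ 2) = ‖x‖ := Real.sqrt_sq (norm_nonneg x)
  refine h3.congr_fderiv ?_
  symm
  ext v
  simp only [ContinuousLinearMap.smul_apply, hsq, two_smul, ContinuousLinearMap.add_apply]
  field_simp
  ring

lemma fw_grad_ineq (b q q' : E) (hq : q ≠ b) :
    ‖b - q‖ - ⟪‖b - q‖⁻¹ • (b - q), q' - q⟫ ≤ ‖b - q'‖ := by
  set g : E := ‖b - q‖⁻¹ • (b - q) with hg
  have hne : b - q ≠ 0 := sub_ne_zero.2 fun h => hq h.symm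
  have hnorm : ‖b - q‖ ≠ 0 := norm_ne_zero_iff.2 hne
  have hgnorm : ‖g‖ = 1 := by
    rw [hg, norm_smul, norm_inv, norm_norm, inv_mul_cancel₀ hnorm]
  have h1 : ⟪g, b - q'⟫ ≤ ‖b - q'‖ := by
    calc ⟪g, b - q'⟫ ≤ ‖g‖ * ‖b - q'‖ := real_inner_le_norm g _
    _ = ‖b - q'‖ := by rw [hgnorm, one_mul]
  have h2 : ⟪g, b - q'⟫ = ‖b - q‖ - ⟪g, q' - q⟫ := by
    have : (b : E) - q' = (b - q) - (q' - q) := by abel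
    rw [this, inner_sub_right]
    congr 1
    rw [hg, real_inner_smul_left, real_inner_self_eq_norm_sq]
    field_simp
  linarith [h1, h2 ▸ h1]

end Helpers

section FW
variable {d n : ℕ} (P : Fin n → EuclideanSpace ℝ (Fin d)) (ω : Fin n → ℝ)

noncomputable def fwF (q : EuclideanSpace ℝ (Fin d)) : ℝ := ∑ i, ω i * ‖P i - q‖

noncomputable def fwU (q : EuclideanSpace ℝ (Fin d)) : EuclideanSpace ℝ (Fin d) :=
  ∑ i, ω i • bearing P q i

open Classical in
noncomputable def fwRfun (b q : EuclideanSpace ℝ (Fin d)) : EuclideanSpace ℝ (Fin d) :=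
  ∑ j ∈ Finset.univ.filter (fun j => P j ≠ b), ω j • bearing P q j

open Classical in
noncomputable def fwW (b : EuclideanSpace ℝ (Fin d)) : ℝ :=
  ∑ j ∈ Finset.univ.filter (fun j => P j = b), ω j

lemma fwF_hasFDerivAt {q : EuclideanSpace ℝ (Fin d)} (hq : ∀ i, q ≠ P i) :
    HasFDerivAt (fwF P ω) (-(innerSL ℝ (fwU P ω q))) q := by
  have hterm : ∀ i : Fin n, HasFDerivAt (fun y => ω i * ‖P i - y‖)
      (-(innerSL ℝ (ω i • bearing P q i))) q := by
    intro i
    have hne : P i - q ≠ 0 := sub_ne_zero.2 fun h => hq i h.symm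
    have hsub : HasFDerivAt (fun y : EuclideanSpace ℝ (Fin d) => P i - y)
        (-(ContinuousLinearMap.id ℝ (EuclideanSpace ℝ (Fin d)))) q := by
      exact ((hasFDerivAt_const (𝕜 := ℝ) (P i) q).sub (hasFDerivAt_id (𝕜 := ℝ) q)).congr_fderiv (by simp)
    have h1 := (fw_hasFDerivAt_norm' hne).comp q hsub
    have h2 := h1.const_mul (ω i)
    refine h2.congr_fderiv ?_
    symm
    ext v
    simp only [bearing, ContinuousLinearMap.neg_apply, innerSL_apply_apply,
      ContinuousLinearMap.coe_comp', Function.comp_apply, ContinuousLinearMap.coe_smul',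
      Pi.smul_apply, ContinuousLinearMap.id_apply, real_inner_smul_left, smul_eq_mul,
      inner_neg_right]
    ring
  have hsum := HasFDerivAt.fun_sum (fun i (_ : i ∈ Finset.univ) => hterm i)
  refine hsum.congr_fderiv ?_
  symm
  show -(innerSL ℝ) (∑ i, ω i • bearing P q i) = _
  rw [map_sum, neg_eq_iff_eq_neg, ← Finset.sum_neg_distrib]
  simp

lemma fwF_sub_ineq (hω : ∀ i, 0 < ω i) {q : EuclideanSpace ℝ (Fin d)}
    (hq : ∀ i, q ≠ P i) (q' : EuclideanSpace ℝ (Fin d)) :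
    fwF P ω q - ⟪fwU P ω q, q' - q⟫ ≤ fwF P ω q' := by
  have hterm : ∀ i : Fin n,
      ω i * ‖P i - q‖ - ω i * ⟪bearing P q i, q' - q⟫ ≤ ω i * ‖P i - q'‖ := by
    intro i
    have := fw_grad_ineq (P i) q q' (hq i)
    have h := mul_le_mul_of_nonneg_left this (le_of_lt (hω i))
    rw [mul_sub] at h
    exact h
  have hsum := Finset.sum_le_sum (fun i (_ : i ∈ Finset.univ) => hterm i)
  rw [Finset.sum_sub_distrib] at hsum
  have hinner : ∑ i : Fin n, ω i * ⟪bearing P q i, q' - q⟫ = ⟪fwU P ω q, q' - q⟫ := by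
    rw [fwU, sum_inner]
    congr 1
    funext i
    rw [real_inner_smul_left]
  rw [hinner] at hsum
  exact hsum

lemma fwF_min_of_critical (hω : ∀ i, 0 < ω i) {q : EuclideanSpace ℝ (Fin d)}
    (hq : ∀ i, q ≠ P i) (hcrit : fwU P ω q = 0) (q' : EuclideanSpace ℝ (Fin d)) :
    fwF P ω q ≤ fwF P ω q' := by
  have := fwF_sub_ineq P ω hω hq q'
  rw [hcrit] at this
  simpa using this

lemma fwF_strict_min (hω : ∀ i, 0 < ω i) (hnc : ¬ Collinear ℝ (Set.range P))
    {pstar : EuclideanSpace ℝ (Fin d)} (hps : ∀ i, pstar ≠ P i)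
    (hFW : fwU P ω pstar = 0) {q : EuclideanSpace ℝ (Fin d)} (hqne : q ≠ pstar) :
    fwF P ω pstar < fwF P ω q := by
  rcases lt_or_ge (fwF P ω pstar) (fwF P ω q) with h | h
  · exact h
  exfalso
  have hmin := fwF_min_of_critical P ω hω hps hFW
  have heq : fwF P ω q = fwF P ω pstar := le_antisymm h (hmin q)
  set m : EuclideanSpace ℝ (Fin d) := (2:ℝ)⁻¹ • (q + pstar) with hm
  have hconv : ∀ i : Fin n, ‖P i - m‖ ≤ (2:ℝ)⁻¹ * ‖P i - q‖ + (2:ℝ)⁻¹ * ‖P i - pstar‖ := by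
    intro i
    have : P i - m = (2:ℝ)⁻¹ • (P i - q) + (2:ℝ)⁻¹ • (P i - pstar) := by
      rw [hm]; rw [smul_add, smul_sub, smul_sub]
      module
    rw [this]
    calc ‖(2:ℝ)⁻¹ • (P i - q) + (2:ℝ)⁻¹ • (P i - pstar)‖
        ≤ ‖(2:ℝ)⁻¹ • (P i - q)‖ + ‖(2:ℝ)⁻¹ • (P i - pstar)‖ := norm_add_le _ _
      _ = (2:ℝ)⁻¹ * ‖P i - q‖ + (2:ℝ)⁻¹ * ‖P i - pstar‖ := by
          rw [norm_smul, norm_smul]; norm_num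
  have hslack : ∑ i : Fin n,
      ω i * ((2:ℝ)⁻¹ * ‖P i - q‖ + (2:ℝ)⁻¹ * ‖P i - pstar‖ - ‖P i - m‖) ≤ 0 := by
    have hFm : fwF P ω pstar ≤ fwF P ω m := hmin m
    have expand : ∑ i : Fin n,
        ω i * ((2:ℝ)⁻¹ * ‖P i - q‖ + (2:ℝ)⁻¹ * ‖P i - pstar‖ - ‖P i - m‖)
        = (2:ℝ)⁻¹ * fwF P ω q + (2:ℝ)⁻¹ * fwF P ω pstar - fwF P ω m := by
      rw [fwF, fwF, fwF, Finset.mul_sum, Finset.mul_sum, ← Finset.sum_add_distrib,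
        ← Finset.sum_sub_distrib]
      congr 1; funext i; ring
    rw [expand, heq]
    linarith
  have hterm0 : ∀ i : Fin n,
      (2:ℝ)⁻¹ * ‖P i - q‖ + (2:ℝ)⁻¹ * ‖P i - pstar‖ - ‖P i - m‖ = 0 := by
    have hnn : ∀ i ∈ Finset.univ, (0:ℝ) ≤
        ω i * ((2:ℝ)⁻¹ * ‖P i - q‖ + (2:ℝ)⁻¹ * ‖P i - pstar‖ - ‖P i - m‖) := by
      intro i _
      exact mul_nonneg (le_of_lt (hω i)) (by linarith [hconv i])
    have hz := le_antisymm hslack (Finset.sum_nonneg hnn)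
    intro i
    have := (Finset.sum_eq_zero_iff_of_nonneg hnn).1 hz i (Finset.mem_univ i)
    have hωne : ω i ≠ 0 := ne_of_gt (hω i)
    exact (mul_eq_zero.1 this).resolve_left hωne
  apply hnc
  rw [collinear_iff_exists_forall_eq_smul_vadd]
  refine ⟨pstar, q - pstar, ?_⟩
  rintro _ ⟨i, rfl⟩
  have hray : SameRay ℝ (P i - q) (P i - pstar) := by
    rw [sameRay_iff_norm_add]
    have h0 := hterm0 i
    have hsum : P i - m = (2:ℝ)⁻¹ • ((P i - q) + (P i - pstar)) := by
      rw [hm]; rw [smul_add]; module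
    have : ‖P i - m‖ = (2:ℝ)⁻¹ * ‖(P i - q) + (P i - pstar)‖ := by
      rw [hsum, norm_smul]; norm_num
    rw [this] at h0
    linarith
  have hy : P i - pstar ≠ 0 := sub_ne_zero.2 fun h => hps i h.symm
  by_cases hx : P i - q = 0
  · have hPiq : P i = q := by rwa [sub_eq_zero] at hx
    refine ⟨1, ?_⟩
    rw [hPiq, one_smul, vadd_eq_add]
    abel
  · obtain ⟨r, hr0, hr⟩ := hray.exists_nonneg_left hx
    have hr1 : r ≠ 1 := by
      intro h
      rw [h, one_smul] at hr
      exact hqne (sub_right_injective hr)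
    have hr1' : r - 1 ≠ 0 := sub_ne_zero.2 hr1
    have key : (r - 1) • (P i - pstar) = r • (q - pstar) := by
      have h2 : r • ((P i - pstar) - (q - pstar)) = P i - pstar := by
        rw [show (P i - pstar) - (q - pstar) = P i - q by abel]
        exact hr
      rw [smul_sub] at h2
      rw [sub_smul, one_smul]
      linear_combination (norm := module) h2
    have hPi : P i - pstar = ((r - 1)⁻¹ * r) • (q - pstar) := by
      calc P i - pstar = (r - 1)⁻¹ • ((r - 1) • (P i - pstar)) := by
            rw [inv_smul_smul₀ hr1']
        _ = (r - 1)⁻¹ • (r • (q - pstar)) := by rw [key]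
        _ = ((r - 1)⁻¹ * r) • (q - pstar) := by rw [smul_smul]
    refine ⟨(r - 1)⁻¹ * r, ?_⟩
    rw [vadd_eq_add, ← hPi]
    abel

lemma fwF_critical_eq (hω : ∀ i, 0 < ω i) (hnc : ¬ Collinear ℝ (Set.range P))
    {pstar : EuclideanSpace ℝ (Fin d)} (hps : ∀ i, pstar ≠ P i)
    (hFW : fwU P ω pstar = 0) {q : EuclideanSpace ℝ (Fin d)}
    (hq : ∀ i, q ≠ P i) (hcrit : fwU P ω q = 0) : q = pstar := by
  by_contra hne
  have h1 := fwF_min_of_critical P ω hω hq hcrit pstar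
  have h2 := fwF_strict_min P ω hω hnc hps hFW hne
  linarith

open Classical in
lemma fwF_ge_beacon (hω : ∀ i, 0 < ω i) (b : EuclideanSpace ℝ (Fin d))
    (hb : ‖fwRfun P ω b b‖ ≤ fwW P ω b) (q' : EuclideanSpace ℝ (Fin d)) :
    fwF P ω b ≤ fwF P ω q' := by
  have hsplit := Finset.sum_filter_add_sum_filter_not Finset.univ
    (fun j => P j = b) (fun j => ω j * ‖P j - q'‖)
  have hsplit_b := Finset.sum_filter_add_sum_filter_not Finset.univ
    (fun j => P j = b) (fun j => ω j * ‖P j - b‖)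
  have hzero : ∑ j ∈ Finset.univ.filter (fun j => P j = b), ω j * ‖P j - b‖ = 0 := by
    apply Finset.sum_eq_zero
    intro j hj
    rw [Finset.mem_filter] at hj
    rw [hj.2]
    simp
  have hFb : fwF P ω b = ∑ j ∈ Finset.univ.filter (fun j => ¬ P j = b), ω j * ‖P j - b‖ := by
    rw [fwF, ← hsplit_b, hzero, zero_add]
  have hfirst : ∑ j ∈ Finset.univ.filter (fun j => P j = b), ω j * ‖P j - q'‖
      = fwW P ω b * ‖q' - b‖ := by
    rw [fwW, Finset.sum_mul]
    apply Finset.sum_congr rfl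
    intro j hj
    rw [Finset.mem_filter] at hj
    rw [hj.2, norm_sub_rev]
  have hsecond : ∑ j ∈ Finset.univ.filter (fun j => ¬ P j = b), ω j * ‖P j - b‖
        - ⟪fwRfun P ω b b, q' - b⟫
      ≤ ∑ j ∈ Finset.univ.filter (fun j => ¬ P j = b), ω j * ‖P j - q'‖ := by
    have hterm : ∀ j ∈ Finset.univ.filter (fun j => ¬ P j = b),
        ω j * ‖P j - b‖ - ω j * ⟪‖P j - b‖⁻¹ • (P j - b), q' - b⟫
          ≤ ω j * ‖P j - q'‖ := by
      intro j hj
      rw [Finset.mem_filter] at hj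
      have hbq : b ≠ P j := fun h => hj.2 h.symm
      have := fw_grad_ineq (P j) b q' hbq
      have h := mul_le_mul_of_nonneg_left this (le_of_lt (hω j))
      rw [mul_sub] at h
      exact h
    have hsum := Finset.sum_le_sum hterm
    rw [Finset.sum_sub_distrib] at hsum
    have hinner : ∑ j ∈ Finset.univ.filter (fun j => ¬ P j = b),
        ω j * ⟪‖P j - b‖⁻¹ • (P j - b), q' - b⟫ = ⟪fwRfun P ω b b, q' - b⟫ := by
      rw [fwRfun, sum_inner]
      apply Finset.sum_congr rfl
      intro j hj
      simp only [bearing, real_inner_smul_left]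
    rw [hinner] at hsum
    exact hsum
  have hCS : ⟪fwRfun P ω b b, q' - b⟫ ≤ ‖fwRfun P ω b b‖ * ‖q' - b‖ := real_inner_le_norm _ _
  have hW : ‖fwRfun P ω b b‖ * ‖q' - b‖ ≤ fwW P ω b * ‖q' - b‖ :=
    mul_le_mul_of_nonneg_right hb (norm_nonneg _)
  calc fwF P ω b = ∑ j ∈ Finset.univ.filter (fun j => ¬ P j = b), ω j * ‖P j - b‖ := hFb
    _ ≤ fwW P ω b * ‖q' - b‖ +
        (∑ j ∈ Finset.univ.filter (fun j => ¬ P j = b), ω j * ‖P j - b‖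
          - ⟪fwRfun P ω b b, q' - b⟫) := by linarith
    _ ≤ ∑ j ∈ Finset.univ.filter (fun j => P j = b), ω j * ‖P j - q'‖
        + ∑ j ∈ Finset.univ.filter (fun j => ¬ P j = b), ω j * ‖P j - q'‖ := by
        rw [hfirst]
        linarith [hsecond]
    _ = fwF P ω q' := by rw [fwF, ← hsplit]

lemma fwF_continuous : Continuous (fwF P ω) := by
  apply continuous_finset_sum
  intro i _
  exact continuous_const.mul ((continuous_const.sub continuous_id).norm)

lemma bearing_continuousAt {q : EuclideanSpace ℝ (Fin d)} {i : Fin n} (h : q ≠ P i) :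
    ContinuousAt (fun y => bearing P y i) q := by
  have hne : ‖P i - q‖ ≠ 0 := norm_ne_zero_iff.2 (sub_ne_zero.2 fun hh => h hh.symm)
  have h1 : ContinuousAt (fun y : EuclideanSpace ℝ (Fin d) => ‖P i - y‖) q :=
    ((continuous_const.sub continuous_id).norm).continuousAt
  exact (h1.inv₀ hne).smul (continuous_const.sub continuous_id).continuousAt

lemma fwU_continuousAt {q : EuclideanSpace ℝ (Fin d)} (h : ∀ i, q ≠ P i) :
    ContinuousAt (fwU P ω) q := by
  exact tendsto_finset_sum Finset.univ
    (fun i _ => ((bearing_continuousAt P (h i)).const_smul (ω i) : _))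

lemma bearing_norm_le (q : EuclideanSpace ℝ (Fin d)) (i : Fin n) :
    ‖bearing P q i‖ ≤ 1 := by
  rw [bearing, norm_smul, norm_inv, norm_norm]
  rcases eq_or_ne (‖P i - q‖) 0 with h | h
  · simp [h]
  · rw [inv_mul_cancel₀ h]

lemma sublevel_compact (hω : ∀ i, 0 < ω i) (hn : 0 < n) (c : ℝ) :
    IsCompact {q : EuclideanSpace ℝ (Fin d) | fwF P ω q ≤ c} := by
  apply Metric.isCompact_of_isClosed_isBounded
  · exact isClosed_le (fwF_continuous P ω) continuous_const
  · rw [isBounded_iff_forall_norm_le]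
    set i0 : Fin n := ⟨0, hn⟩
    refine ⟨‖P i0‖ + c / ω i0, ?_⟩
    intro q hq
    simp only [Set.mem_setOf_eq] at hq
    have h1 : ω i0 * ‖P i0 - q‖ ≤ fwF P ω q := by
      rw [fwF]
      apply Finset.single_le_sum (f := fun i => ω i * ‖P i - q‖)
        (fun i _ => mul_nonneg (le_of_lt (hω i)) (norm_nonneg _)) (Finset.mem_univ i0)
    have h2 : ‖P i0 - q‖ ≤ c / ω i0 := by
      rw [le_div_iff₀ (hω i0)]
      linarith [h1, hq]
    have h3 : ‖q‖ ≤ ‖P i0‖ + ‖P i0 - q‖ := by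
      calc ‖q‖ = ‖P i0 - (P i0 - q)‖ := by congr 1; abel
        _ ≤ ‖P i0‖ + ‖P i0 - q‖ := norm_sub_le _ _
    linarith


open Classical in
lemma fwU_decomp (b q : EuclideanSpace ℝ (Fin d)) :
    fwU P ω q = fwRfun P ω b q + ∑ j ∈ Finset.univ.filter (fun j => P j = b),
      ω j • bearing P q j := by
  rw [fwU, fwRfun, add_comm]
  exact (Finset.sum_filter_add_sum_filter_not Finset.univ (fun j => P j = b) _).symm

open Classical in
lemma fwW_nonneg (hω : ∀ i, 0 < ω i) (b : EuclideanSpace ℝ (Fin d)) : 0 ≤ fwW P ω b :=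
  Finset.sum_nonneg fun j _ => le_of_lt (hω j)

open Classical in
lemma near_beacon (hω : ∀ i, 0 < ω i) (b : EuclideanSpace ℝ (Fin d))
    (hb : fwW P ω b < ‖fwRfun P ω b b‖) :
    ∃ ε > 0, ∀ q, dist q b < ε →
      (‖fwRfun P ω b b‖ - fwW P ω b) / 2 ≤ ‖fwU P ω q‖ := by
  set δ := (‖fwRfun P ω b b‖ - fwW P ω b) / 2 with hδ
  have hδpos : 0 < δ := by rw [hδ]; linarith
  have hcont : ContinuousAt (fwRfun P ω b) b := by
    apply tendsto_finset_sum
    intro j hj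
    rw [Finset.mem_filter] at hj
    exact (bearing_continuousAt P (fun h => hj.2 h.symm)).const_smul (ω j)
  rw [Metric.continuousAt_iff] at hcont
  obtain ⟨ε, hε, hball⟩ := hcont δ hδpos
  refine ⟨ε, hε, fun q hq => ?_⟩
  have h1 : ‖fwRfun P ω b q - fwRfun P ω b b‖ < δ := by
    have := hball hq
    rwa [dist_eq_norm] at this
  have h2 : ‖fwRfun P ω b b‖ - δ ≤ ‖fwRfun P ω b q‖ := by
    have := norm_sub_norm_le (fwRfun P ω b b) (fwRfun P ω b q)
    have h3 : ‖fwRfun P ω b b - fwRfun P ω b q‖ < δ := by rwa [norm_sub_rev] at h1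
    linarith
  have h4 : ‖∑ j ∈ Finset.univ.filter (fun j => P j = b), ω j • bearing P q j‖
      ≤ fwW P ω b := by
    calc ‖∑ j ∈ Finset.univ.filter (fun j => P j = b), ω j • bearing P q j‖
        ≤ ∑ j ∈ Finset.univ.filter (fun j => P j = b), ‖ω j • bearing P q j‖ :=
          norm_sum_le _ _
      _ ≤ ∑ j ∈ Finset.univ.filter (fun j => P j = b), ω j := by
          apply Finset.sum_le_sum
          intro j _
          rw [norm_smul, Real.norm_eq_abs, abs_of_pos (hω j)]
          calc ω j * ‖bearing P q j‖ ≤ ω j * 1 :=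
                mul_le_mul_of_nonneg_left (bearing_norm_le P q j) (le_of_lt (hω j))
            _ = ω j := mul_one _
      _ = fwW P ω b := rfl
  have h5 : ‖fwRfun P ω b q‖ - fwW P ω b ≤ ‖fwU P ω q‖ := by
    rw [fwU_decomp P ω b q]
    have := norm_sub_norm_le (fwRfun P ω b q)
      (-(∑ j ∈ Finset.univ.filter (fun j => P j = b), ω j • bearing P q j))
    rw [norm_neg, sub_neg_eq_add] at this
    linarith [h4, this]
  rw [hδ] at *
  linarith

lemma beacon_lt (hω : ∀ i, 0 < ω i) (hnc : ¬ Collinear ℝ (Set.range P))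
    {pstar : EuclideanSpace ℝ (Fin d)} (hps : ∀ i, pstar ≠ P i)
    (hFW : fwU P ω pstar = 0) (i : Fin n) :
    fwW P ω (P i) < ‖fwRfun P ω (P i) (P i)‖ := by
  by_contra h
  push_neg at h
  have h1 := fwF_ge_beacon P ω hω (P i) h pstar
  have h2 := fwF_strict_min P ω hω hnc hps hFW (q := P i) (fun he => hps i he.symm)
  linarith

lemma global_bound (hω : ∀ i, 0 < ω i) (hnc : ¬ Collinear ℝ (Set.range P))
    {pstar : EuclideanSpace ℝ (Fin d)} (hps : ∀ i, pstar ≠ P i)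
    (hFW : fwU P ω pstar = 0) (hn : 0 < n) (c L : ℝ) (hL : fwF P ω pstar < L) :
    ∃ m > 0, ∀ q, fwF P ω q ≤ c → L ≤ fwF P ω q → m ≤ ‖fwU P ω q‖ := by
  classical
  have hnb := fun i => near_beacon P ω hω (P i) (beacon_lt P ω hω hnc hps hFW i)
  choose ε hεpos hball using hnb
  set δ : Fin n → ℝ := fun i => (‖fwRfun P ω (P i) (P i)‖ - fwW P ω (P i)) / 2 with hδdef
  have hδpos : ∀ i, 0 < δ i := by
    intro i
    have := beacon_lt P ω hω hnc hps hFW i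
    rw [hδdef]
    dsimp only
    linarith
  haveI : Nonempty (Fin n) := ⟨⟨0, hn⟩⟩
  set S : Set (EuclideanSpace ℝ (Fin d)) :=
    {q | (fwF P ω q ≤ c ∧ L ≤ fwF P ω q) ∧ ∀ i, ε i ≤ dist q (P i)} with hS
  have hScompact : IsCompact S := by
    apply (sublevel_compact P ω hω hn c).of_isClosed_subset
    · have hrw : S = ({q : EuclideanSpace ℝ (Fin d) | fwF P ω q ≤ c}
          ∩ {q | L ≤ fwF P ω q})
          ∩ ⋂ i, {q : EuclideanSpace ℝ (Fin d) | ε i ≤ dist q (P i)} := by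
        ext q
        simp only [hS, Set.mem_setOf_eq, Set.mem_inter_iff, Set.mem_iInter]
      rw [hrw]
      refine IsClosed.inter (IsClosed.inter ?_ ?_) (isClosed_iInter fun i => ?_)
      · exact isClosed_le (fwF_continuous P ω) continuous_const
      · exact isClosed_le continuous_const (fwF_continuous P ω)
      · exact isClosed_le continuous_const (continuous_id.dist continuous_const)
    · intro q hq
      exact hq.1.1
  have hSne : ∀ q ∈ S, ∀ i, q ≠ P i := by
    intro q hq i he
    have := hq.2 i
    rw [he, dist_self] at this
    linarith [hεpos i]
  have hSpos : ∀ q ∈ S, 0 < ‖fwU P ω q‖ := by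
    intro q hq
    rw [norm_pos_iff]
    intro h0
    have := fwF_critical_eq P ω hω hnc hps hFW (hSne q hq) h0
    rw [this] at hq
    have := hq.1.2
    linarith
  have hδmin : ∃ dm > 0, ∀ i, dm ≤ δ i := by
    obtain ⟨i0, hi0⟩ := Finset.exists_min_image Finset.univ δ ⟨⟨0, hn⟩, Finset.mem_univ _⟩
    exact ⟨δ i0, hδpos i0, fun i => hi0.2 i (Finset.mem_univ i)⟩
  obtain ⟨dm, hdm, hdmle⟩ := hδmin
  rcases Set.eq_empty_or_nonempty S with hSe | hSne'
  · refine ⟨dm, hdm, fun q hq1 hq2 => ?_⟩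
    by_cases hqnear : ∃ i, dist q (P i) < ε i
    · obtain ⟨i, hi⟩ := hqnear
      have := hball i q hi
      calc dm ≤ δ i := hdmle i
        _ ≤ ‖fwU P ω q‖ := this
    · push_neg at hqnear
      exfalso
      have : q ∈ S := ⟨⟨hq1, hq2⟩, hqnear⟩
      rw [hSe] at this
      exact this
  · have hcont : ContinuousOn (fun q => ‖fwU P ω q‖) S := by
      intro q hq
      exact ((fwU_continuousAt P ω (hSne q hq)).norm).continuousWithinAt
    obtain ⟨q0, hq0S, hq0min⟩ := hScompact.exists_isMinOn hSne' hcont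
    refine ⟨min dm (‖fwU P ω q0‖), lt_min hdm (hSpos q0 hq0S), fun q hq1 hq2 => ?_⟩
    by_cases hqnear : ∃ i, dist q (P i) < ε i
    · obtain ⟨i, hi⟩ := hqnear
      calc min dm (‖fwU P ω q0‖) ≤ dm := min_le_left _ _
        _ ≤ δ i := hdmle i
        _ ≤ ‖fwU P ω q‖ := hball i q hi
    · push_neg at hqnear
      have hqS : q ∈ S := ⟨⟨hq1, hq2⟩, hqnear⟩
      calc min dm (‖fwU P ω q0‖) ≤ ‖fwU P ω q0‖ := min_le_right _ _
        _ ≤ ‖fwU P ω q‖ := hq0min hqS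

end FW

lemma inner_siga {d : ℕ} (a : ℝ) (ha : 0 < a) (v : EuclideanSpace ℝ (Fin d)) :
    ⟪v, siga a v⟫ = ∑ k, |v k| ^ (1 + a) := by
  rw [PiLp.inner_apply]
  apply Finset.sum_congr rfl
  intro k _
  simp only [siga, RCLike.inner_apply, conj_trivial]
  rcases eq_or_ne (v k) 0 with h | h
  · rw [h]
    simp [Real.zero_rpow (by positivity : (1:ℝ) + a ≠ 0)]
  · have habs : 0 < |v k| := abs_pos.2 h
    have : v k * (Real.sign (v k) * |v k| ^ a) = (v k * Real.sign (v k)) * |v k| ^ a := by ring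
    rw [show (v k).sign * |v k| ^ a * v k = v k * (Real.sign (v k) * |v k| ^ a) by ring, this]
    have hsign : v k * Real.sign (v k) = |v k| := by
      rcases lt_or_gt_of_ne h with hneg | hpos
      · rw [Real.sign_of_neg hneg, abs_of_neg hneg]; ring
      · rw [Real.sign_of_pos hpos, abs_of_pos hpos]; ring
    rw [hsign, Real.rpow_add habs, Real.rpow_one]

lemma inner_siga_nonneg {d : ℕ} (a : ℝ) (ha : 0 < a) (v : EuclideanSpace ℝ (Fin d)) :
    0 ≤ ⟪v, siga a v⟫ := by
  rw [inner_siga a ha v]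
  exact Finset.sum_nonneg fun k _ => Real.rpow_nonneg (abs_nonneg _) _

lemma inner_siga_lower {d : ℕ} (hd : 0 < d) (a : ℝ) (ha : 0 < a)
    {m : ℝ} (hm : 0 ≤ m) {v : EuclideanSpace ℝ (Fin d)} (hv : m ≤ ‖v‖) :
    (m / Real.sqrt d) ^ (1 + a) ≤ ⟪v, siga a v⟫ := by
  haveI : Nonempty (Fin d) := ⟨⟨0, hd⟩⟩
  obtain ⟨k0, _, hk0⟩ := Finset.exists_max_image Finset.univ (fun k => |v k|)
    ⟨⟨0, hd⟩, Finset.mem_univ _⟩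
  have hcomp : ‖v‖ ≤ Real.sqrt d * |v k0| := by
    rw [EuclideanSpace.norm_eq]
    have hsum : ∑ k, v k ^ 2 ≤ d * |v k0| ^ 2 := by
      calc ∑ k, v k ^ 2 ≤ ∑ _k : Fin d, |v k0| ^ 2 := by
            apply Finset.sum_le_sum
            intro k _
            rw [← sq_abs]
            exact pow_le_pow_left₀ (abs_nonneg _) (hk0 k (Finset.mem_univ k)) 2
        _ = d * |v k0| ^ 2 := by rw [Finset.sum_const, Finset.card_univ, Fintype.card_fin,
            nsmul_eq_mul]
    calc Real.sqrt (∑ k, ‖v k‖ ^ 2) = Real.sqrt (∑ k, v k ^ 2) := by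
          congr 1; apply Finset.sum_congr rfl; intro k _; rw [Real.norm_eq_abs, sq_abs]
      _ ≤ Real.sqrt (d * |v k0| ^ 2) := Real.sqrt_le_sqrt hsum
      _ = Real.sqrt d * |v k0| := by
          rw [Real.sqrt_mul (Nat.cast_nonneg d), Real.sqrt_sq (abs_nonneg _)]
  have hsd : 0 < Real.sqrt d := Real.sqrt_pos.2 (by exact_mod_cast hd)
  have hk0ge : m / Real.sqrt d ≤ |v k0| := by
    rw [div_le_iff₀ hsd]
    calc m ≤ ‖v‖ := hv
      _ ≤ Real.sqrt d * |v k0| := hcomp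
      _ = |v k0| * Real.sqrt d := mul_comm _ _
  rw [inner_siga a ha v]
  calc (m / Real.sqrt d) ^ (1 + a) ≤ |v k0| ^ (1 + a) :=
        Real.rpow_le_rpow (by positivity) hk0ge (by linarith)
    _ ≤ ∑ k, |v k| ^ (1 + a) := by
        apply Finset.single_le_sum (f := fun k => |v k| ^ (1 + a))
          (fun k _ => Real.rpow_nonneg (abs_nonneg _) _) (Finset.mem_univ k0)


theorem stmt_12 {d n : ℕ} (hd : 2 ≤ d) (hn : 3 ≤ n)
    (P : Fin n → EuclideanSpace ℝ (Fin d)) (ω : Fin n → ℝ) (hω : ∀ i, 0 < ω i)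
    (hnc : ¬ Collinear ℝ (Set.range P))
    (pstar : EuclideanSpace ℝ (Fin d)) (hps : ∀ i, pstar ≠ P i)
    (hFW : ∑ i, ω i • bearing P pstar i = 0)
    (a : ℝ) (ha : a ∈ Set.Ioo (0:ℝ) 1)
    (p : ℝ → EuclideanSpace ℝ (Fin d))
    (hpne : ∀ t ≥ (0:ℝ), ∀ i, p t ≠ P i)
    (hdyn : ∀ t ≥ (0:ℝ),
      HasDerivAt p (siga a (∑ i, ω i • bearing P (p t) i)) t) :
    Filter.Tendsto p Filter.atTop (nhds pstar) := by
  obtain ⟨ha0, ha1⟩ := ha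
  have hd0 : 0 < d := by omega
  have hn0 : 0 < n := by omega
  have hFW' : fwU P ω pstar = 0 := hFW
  set V : ℝ → ℝ := fun t => fwF P ω (p t) with hV
  -- derivative of the Lyapunov function
  have hVderiv : ∀ t ≥ (0:ℝ),
      HasDerivAt V (-(⟪fwU P ω (p t), siga a (fwU P ω (p t))⟫)) t := by
    intro t ht
    have h1 := (fwF_hasFDerivAt P ω (hpne t ht)).comp_hasDerivAt t (hdyn t ht)
    exact h1.congr_deriv (by simp only [fwU, ContinuousLinearMap.neg_apply, innerSL_apply_apply])
  -- V is antitone on [0, ∞)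
  have hVanti : AntitoneOn V (Set.Ici (0:ℝ)) := by
    apply antitoneOn_of_deriv_nonpos (convex_Ici 0)
    · intro t ht
      exact ((hVderiv t ht).continuousAt).continuousWithinAt
    · intro t ht
      rw [interior_Ici] at ht
      exact ((hVderiv t (le_of_lt ht)).differentiableAt).differentiableWithinAt
    · intro t ht
      rw [interior_Ici] at ht
      rw [(hVderiv t (le_of_lt ht)).deriv]
      exact neg_nonpos.2 (inner_siga_nonneg a ha0 _)
  -- escape below any level L > fwF pstar
  have hescape : ∀ L, fwF P ω pstar < L → ∃ T ≥ (0:ℝ), V T < L := by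
    intro L hL
    by_contra hcon
    push_neg at hcon
    obtain ⟨m, hm, hmbound⟩ :=
      global_bound P ω hω hnc hps hFW' hn0 (V 0) L hL
    set m' := (m / Real.sqrt d) ^ ((1:ℝ) + a) with hm'
    have hsd : 0 < Real.sqrt d := Real.sqrt_pos.2 (by exact_mod_cast hd0)
    have hm'pos : 0 < m' := Real.rpow_pos_of_pos (div_pos hm hsd) _
    have hganti : AntitoneOn (fun t => V t + m' * t) (Set.Ici (0:ℝ)) := by
      apply antitoneOn_of_deriv_nonpos (convex_Ici 0)
      · intro t ht
        exact (((hVderiv t ht).continuousAt).add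
          ((continuous_const.mul continuous_id).continuousAt)).continuousWithinAt
      · intro t ht
        rw [interior_Ici] at ht
        exact (((hVderiv t (le_of_lt ht)).differentiableAt).add
          (((hasDerivAt_id t).const_mul m').differentiableAt)).differentiableWithinAt
      · intro t ht
        rw [interior_Ici] at ht
        have hderiv : HasDerivAt (fun t => V t + m' * t)
            (-(⟪fwU P ω (p t), siga a (fwU P ω (p t))⟫) + m' * 1) t :=
          (hVderiv t (le_of_lt ht)).add ((hasDerivAt_id t).const_mul m')
        rw [hderiv.deriv]
        have hVle : V t ≤ V 0 :=
          hVanti (Set.self_mem_Ici) (Set.mem_Ici.2 (le_of_lt ht)) (le_of_lt ht)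
        have hmle := hmbound (p t) hVle (hcon t (le_of_lt ht))
        have hlow := inner_siga_lower hd0 a ha0 (le_of_lt hm) hmle
        rw [← hm'] at hlow
        linarith
    set T : ℝ := (V 0 - L) / m' + 1 with hT
    have hVL0 : L ≤ V 0 := hcon 0 le_rfl
    have hT0 : 0 ≤ T := by
      rw [hT]
      have : 0 ≤ (V 0 - L) / m' := div_nonneg (by linarith) (le_of_lt hm'pos)
      linarith
    have hgle : V T + m' * T ≤ V 0 + m' * 0 :=
      hganti Set.self_mem_Ici (Set.mem_Ici.2 hT0) hT0
    have hVT : V T ≤ V 0 - m' * T := by linarith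
    have hmT : m' * T = (V 0 - L) + m' := by
      rw [hT]
      field_simp
    have : V T < L := by
      rw [hmT] at hVT
      linarith
    linarith [hcon T hT0]
  -- shrinkage of sublevel sets around pstar
  have hshrink : ∀ εb > (0:ℝ), ∃ δ > (0:ℝ), ∀ q : EuclideanSpace ℝ (Fin d),
      fwF P ω q ≤ fwF P ω pstar + δ → dist q pstar < εb := by
    intro εb hεb
    set C : Set (EuclideanSpace ℝ (Fin d)) :=
      {q | fwF P ω q ≤ fwF P ω pstar + 1} ∩ {q | εb ≤ dist q pstar} with hC
    have hCclosed : IsClosed C :=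
      (isClosed_le (fwF_continuous P ω) continuous_const).inter
        (isClosed_le continuous_const (continuous_id.dist continuous_const))
    have hCcomp : IsCompact C :=
      (sublevel_compact P ω hω hn0 (fwF P ω pstar + 1)).of_isClosed_subset hCclosed
        Set.inter_subset_left
    rcases Set.eq_empty_or_nonempty C with hCe | hCne
    · refine ⟨1, one_pos, fun q hq => ?_⟩
      by_contra hdist
      push_neg at hdist
      have : q ∈ C := ⟨hq, hdist⟩
      rw [hCe] at this
      exact this
    · obtain ⟨q0, hq0C, hq0min⟩ := hCcomp.exists_isMinOn hCne
        ((fwF_continuous P ω).continuousOn)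
      have hq0ne : q0 ≠ pstar := by
        intro h
        have h2 := hq0C.2
        simp only [Set.mem_setOf_eq, h, dist_self] at h2
        linarith
      have hq0gt : fwF P ω pstar < fwF P ω q0 :=
        fwF_strict_min P ω hω hnc hps hFW' hq0ne
      refine ⟨min 1 ((fwF P ω q0 - fwF P ω pstar) / 2),
        lt_min one_pos (by linarith), fun q hq => ?_⟩
      by_contra hdist
      push_neg at hdist
      have hqC : q ∈ C := ⟨by
        simp only [Set.mem_setOf_eq]
        calc fwF P ω q ≤ fwF P ω pstar + min 1 ((fwF P ω q0 - fwF P ω pstar) / 2) := hq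
          _ ≤ fwF P ω pstar + 1 := by linarith [min_le_left 1 ((fwF P ω q0 - fwF P ω pstar) / 2)]
        , hdist⟩
      have h1 : fwF P ω q0 ≤ fwF P ω q := hq0min hqC
      have h2 : fwF P ω q ≤ fwF P ω pstar + (fwF P ω q0 - fwF P ω pstar) / 2 := by
        calc fwF P ω q ≤ fwF P ω pstar + min 1 ((fwF P ω q0 - fwF P ω pstar) / 2) := hq
          _ ≤ _ := by linarith [min_le_right 1 ((fwF P ω q0 - fwF P ω pstar) / 2)]
      linarith
  -- conclude
  rw [Metric.tendsto_atTop]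
  intro εb hεb
  obtain ⟨δ, hδpos, hδ⟩ := hshrink εb hεb
  obtain ⟨T, hT0, hTlt⟩ := hescape (fwF P ω pstar + δ) (by linarith)
  refine ⟨T, fun t ht => ?_⟩
  have ht0 : (0:ℝ) ≤ t := le_trans hT0 ht
  have hVle : V t ≤ V T := hVanti (Set.mem_Ici.2 hT0) (Set.mem_Ici.2 ht0) ht
  exact hδ (p t) (by linarith [hTlt, hVle])
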